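/- Let (X,Y) and (X',Y') be pairs of random variables on a common finite alphabet 𝒳 × 𝒴, and let γ = (1/2)‖P_{XY} − P_{X'Y'}‖₁. If γ ≤ 1 − 1/|𝒳 × 𝒴|, then |I(X;Y) − I(X';Y')| ≤ 3γ log(|𝒳 × 𝒴| − 1) + 3h(γ), where h is the binary entropy function. -/

import Mathlib

open Finset

/-- A probability mass function on a finite type. -/
def IsPMF {α : Type*} [Fintype α] (p : α → ℝ) : Prop :=
  (∀ a, 0 ≤ p a) ∧ ∑ a, p a = 1

/-- Shannon entropy (base 2) of a distribution on a finite type. -/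
noncomputable def ent {α : Type*} [Fintype α] (p : α → ℝ) : ℝ :=
  - ∑ a, p a * Real.logb 2 (p a)

/-- Mutual information (base 2) of a joint distribution. -/
noncomputable def mi {α β : Type*} [Fintype α] [Fintype β] (p : α × β → ℝ) : ℝ :=
  ent (fun a => ∑ b, p (a, b)) + ent (fun b => ∑ a, p (a, b)) - ent p

/-- Conditional mutual information I(first ; second ∣ third) of a joint distribution. -/
noncomputable def cmi {α β γ : Type*} [Fintype α] [Fintype β] [Fintype γ]
    (p : α × β × γ → ℝ) : ℝ :=
  ent (fun ac : α × γ => ∑ b, p (ac.1, b, ac.2))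
    + ent (fun bc : β × γ => ∑ a, p (a, bc.1, bc.2))
    - ent p
    - ent (fun c => ∑ a, ∑ b, p (a, b, c))

/-- Binary entropy function (base 2). -/
noncomputable def hbin (x : ℝ) : ℝ :=
  - x * Real.logb 2 x - (1 - x) * Real.logb 2 (1 - x)

lemma negMulLog_add_le {x y : ℝ} (hx : 0 ≤ x) (hy : 0 ≤ y) :
    Real.negMulLog (x + y) ≤ Real.negMulLog x + Real.negMulLog y := by
  have h1 : -(x * Real.log (x + y)) ≤ Real.negMulLog x := by
    rcases eq_or_lt_of_le hx with h | h
    · simp [← h, Real.negMulLog]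
    · have : Real.log x ≤ Real.log (x + y) := Real.log_le_log h (by linarith)
      simp only [Real.negMulLog, neg_mul]
      nlinarith
  have h2 : -(y * Real.log (x + y)) ≤ Real.negMulLog y := by
    rcases eq_or_lt_of_le hy with h | h
    · simp [← h, Real.negMulLog]
    · have : Real.log y ≤ Real.log (x + y) := Real.log_le_log h (by linarith)
      simp only [Real.negMulLog, neg_mul]
      nlinarith
  have : Real.negMulLog (x + y) = -(x * Real.log (x+y)) + -(y * Real.log (x+y)) := by
    simp [Real.negMulLog]; ring
  linarith

lemma sum_negMulLog_le {α : Type*} [Fintype α] (u : α → ℝ) (hu : ∀ i, 0 ≤ u i)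
    (husum : ∑ i, u i = 1) (m : ℝ)
    (hm : ((univ.filter fun i => 0 < u i).card : ℝ) ≤ m) :
    ∑ i, Real.negMulLog (u i) ≤ Real.log m := by
  set S := univ.filter fun i => 0 < u i with hS
  have hSne : S.Nonempty := by
    by_contra h
    rw [Finset.not_nonempty_iff_eq_empty] at h
    have : ∑ i, u i = 0 := by
      apply Finset.sum_eq_zero
      intro i _
      by_contra hi
      have : i ∈ S := by simp [hS, lt_of_le_of_ne (hu i) (Ne.symm hi)]
      simp [h] at this
    linarith
  have hm0 : 0 < m := lt_of_lt_of_le (by exact_mod_cast Finset.card_pos.mpr hSne) hm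
  have key : ∑ i, Real.negMulLog (u i) = ∑ i ∈ S, Real.negMulLog (u i) := by
    symm
    apply Finset.sum_subset (Finset.subset_univ _)
    intro i _ hi
    have : u i = 0 := le_antisymm (by simpa [hS, not_lt] using hi) (hu i)
    simp [this]
  have husum' : ∑ i ∈ S, u i = 1 := by
    rw [← husum]
    apply Finset.sum_subset (Finset.subset_univ _)
    intro i _ hi
    exact le_antisymm (by simpa [hS, not_lt] using hi) (hu i)
  have step : ∀ i ∈ S, Real.negMulLog (u i) ≤ 1/m - u i + u i * Real.log m := by
    intro i hi
    have hui : 0 < u i := by simpa [hS] using hi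
    have h1 : Real.log (1 / (u i * m)) ≤ 1 / (u i * m) - 1 :=
      Real.log_le_sub_one_of_pos (by positivity)
    have h2 : Real.log (1 / (u i * m)) = - Real.log (u i) - Real.log m := by
      rw [Real.log_div one_ne_zero (by positivity), Real.log_mul (ne_of_gt hui) (ne_of_gt hm0),
        Real.log_one]
      ring
    have h3 : - Real.log (u i) ≤ 1 / (u i * m) - 1 + Real.log m := by linarith
    have : Real.negMulLog (u i) = u i * (- Real.log (u i)) := by
      simp only [Real.negMulLog]; ring
    rw [this]
    calc u i * (- Real.log (u i)) ≤ u i * (1 / (u i * m) - 1 + Real.log m) := by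
          exact mul_le_mul_of_nonneg_left h3 hui.le
      _ = 1/m - u i + u i * Real.log m := by
          field_simp
  calc ∑ i, Real.negMulLog (u i) = ∑ i ∈ S, Real.negMulLog (u i) := key
    _ ≤ ∑ i ∈ S, (1/m - u i + u i * Real.log m) := Finset.sum_le_sum step
    _ = (S.card : ℝ)/m - 1 + Real.log m := by
        rw [Finset.sum_add_distrib, Finset.sum_sub_distrib, ← Finset.sum_mul, husum',
          Finset.sum_const]
        push_cast
        field_simp
        rw [nsmul_eq_mul]
        linear_combination (S.card : ℝ) * mul_one_div_cancel hm0.ne'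
    _ ≤ Real.log m := by
        have : (S.card : ℝ)/m ≤ 1 := by
          rw [div_le_one hm0]; exact hm
        linarith

lemma ent_eq {α : Type*} [Fintype α] (p : α → ℝ) :
    ent p = (∑ a, Real.negMulLog (p a)) / Real.log 2 := by
  rw [ent, Finset.sum_div, ← Finset.sum_neg_distrib]
  apply Finset.sum_congr rfl
  intro a _
  rw [Real.negMulLog, Real.logb]
  ring

lemma hbin_eq (x : ℝ) :
    hbin x = (Real.negMulLog x + Real.negMulLog (1 - x)) / Real.log 2 := by
  rw [hbin, Real.negMulLog, Real.negMulLog, Real.logb, Real.logb]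
  ring

lemma entC {α : Type*} [Fintype α] (p q s : α → ℝ)
    (hp : IsPMF p) (hq : IsPMF q)
    (hs0 : ∀ i, 0 ≤ s i) (hsp : ∀ i, s i ≤ p i) (hsq : ∀ i, s i ≤ q i)
    (γ : ℝ) (hγ0 : 0 ≤ γ) (hγ1 : γ < 1) (hssum : ∑ i, s i = 1 - γ)
    (m : ℝ) (hm : ((univ.filter fun i => s i < p i).card : ℝ) ≤ m) :
    ent p - ent q ≤ γ * Real.logb 2 m + hbin γ := by
  have h1γ : 0 < 1 - γ := by linarith
  have hasum : ∑ i, (p i - s i) = γ := by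
    rw [Finset.sum_sub_distrib, hp.2, hssum]; ring
  have hbsum : ∑ i, (q i - s i) = γ := by
    rw [Finset.sum_sub_distrib, hq.2, hssum]; ring
  -- step 1
  have step1 : ∑ i, Real.negMulLog (p i) ≤
      ∑ i, Real.negMulLog (s i) + ∑ i, Real.negMulLog (p i - s i) := by
    rw [← Finset.sum_add_distrib]
    apply Finset.sum_le_sum
    intro i _
    have := negMulLog_add_le (hs0 i) (sub_nonneg.mpr (hsp i))
    simpa using this
  -- step 2
  have step2 : ∑ i, Real.negMulLog (p i - s i) ≤ γ * Real.log m + Real.negMulLog γ := by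
    rcases eq_or_lt_of_le hγ0 with h0 | h0
    · have : ∀ i ∈ (univ : Finset α), p i - s i = 0 := by
        rw [← Finset.sum_eq_zero_iff_of_nonneg (fun i _ => sub_nonneg.mpr (hsp i))]
        rw [hasum, ← h0]
      have : ∑ i, Real.negMulLog (p i - s i) = 0 := by
        apply Finset.sum_eq_zero
        intro i hi
        rw [this i hi, Real.negMulLog_zero]
      rw [this, ← h0]
      simp
    · have key : ∀ i, Real.negMulLog (p i - s i) =
          ((p i - s i)/γ) * Real.negMulLog γ + γ * Real.negMulLog ((p i - s i)/γ) := by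
        intro i
        have : p i - s i = γ * ((p i - s i)/γ) := by field_simp
        rw [this, Real.negMulLog_mul]
        rw [← this]
      calc ∑ i, Real.negMulLog (p i - s i)
          = (∑ i, (p i - s i)/γ) * Real.negMulLog γ
            + γ * ∑ i, Real.negMulLog ((p i - s i)/γ) := by
            rw [Finset.sum_mul, Finset.mul_sum, ← Finset.sum_add_distrib]
            exact Finset.sum_congr rfl (fun i _ => key i)
        _ ≤ γ * Real.log m + Real.negMulLog γ := by
            have hu1 : ∑ i, (p i - s i)/γ = 1 := by
              rw [← Finset.sum_div, hasum, div_self (ne_of_gt h0)]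
            have hfilt : (univ.filter fun i => 0 < (p i - s i)/γ)
                = (univ.filter fun i => s i < p i) := by
              apply Finset.filter_congr
              intro i _
              simp only [div_pos_iff, sub_pos]
              constructor
              · rintro (⟨h1, _⟩ | ⟨h1, h2⟩)
                · exact h1
                · linarith
              · intro h1
                exact Or.inl ⟨h1, h0⟩
            have := sum_negMulLog_le (fun i => (p i - s i)/γ)
              (fun i => div_nonneg (sub_nonneg.mpr (hsp i)) hγ0) hu1 m (by rw [hfilt]; exact hm)
            rw [hu1, one_mul]
            have h2 : γ * ∑ i, Real.negMulLog ((p i - s i)/γ) ≤ γ * Real.log m :=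
              mul_le_mul_of_nonneg_left this hγ0
            linarith
  -- step 3
  have step3 : ∑ i, Real.negMulLog (s i) - Real.negMulLog (1 - γ) ≤
      ∑ i, Real.negMulLog (q i) := by
    rcases eq_or_lt_of_le hγ0 with h0 | h0
    · have hqs : ∀ i ∈ (univ : Finset α), q i - s i = 0 := by
        rw [← Finset.sum_eq_zero_iff_of_nonneg (fun i _ => sub_nonneg.mpr (hsq i))]
        rw [hbsum, ← h0]
      have : ∑ i, Real.negMulLog (s i) = ∑ i, Real.negMulLog (q i) := by
        apply Finset.sum_congr rfl
        intro i hi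
        have := hqs i hi
        have : s i = q i := by linarith
        rw [this]
      rw [this, ← h0]
      simp
    · have key : ∀ i, (1-γ) * Real.negMulLog (s i / (1-γ)) ≤ Real.negMulLog (q i) := by
        intro i
        have hb1 : (q i - s i)/γ ≤ 1 := by
          rw [div_le_one h0]
          rw [← hbsum]
          exact Finset.single_le_sum (fun j _ => sub_nonneg.mpr (hsq j)) (Finset.mem_univ i)
        have hb0 : 0 ≤ (q i - s i)/γ := div_nonneg (sub_nonneg.mpr (hsq i)) hγ0
        have hconc := Real.concaveOn_negMulLog.2 (Set.mem_Ici.mpr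
            (div_nonneg (hs0 i) h1γ.le)) (Set.mem_Ici.mpr hb0)
            (by linarith : (0:ℝ) ≤ 1 - γ) hγ0 (by ring : (1-γ) + γ = 1)
        have heq : (1-γ) • (s i / (1-γ)) + γ • ((q i - s i)/γ) = q i := by
          simp only [smul_eq_mul]
          field_simp
          ring
        rw [heq] at hconc
        have hnn : 0 ≤ γ • Real.negMulLog ((q i - s i)/γ) := by
          simp only [smul_eq_mul]
          exact mul_nonneg hγ0 (Real.negMulLog_nonneg hb0 hb1)
        simp only [smul_eq_mul] at hconc hnn
        linarith
      have key2 : ∀ i, (1-γ) * Real.negMulLog (s i / (1-γ))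
          = Real.negMulLog (s i) + s i * Real.log (1-γ) := by
        intro i
        rw [div_eq_mul_inv, Real.negMulLog_mul]
        have : Real.negMulLog (1-γ)⁻¹ = (1-γ)⁻¹ * Real.log (1-γ) := by
          rw [Real.negMulLog, Real.log_inv]
          ring
        rw [this]
        field_simp
      have hsum : ∑ i, ((1-γ) * Real.negMulLog (s i / (1-γ)))
          = ∑ i, Real.negMulLog (s i) + (1-γ) * Real.log (1-γ) := by
        calc ∑ i, ((1-γ) * Real.negMulLog (s i / (1-γ)))
            = ∑ i, (Real.negMulLog (s i) + s i * Real.log (1-γ)) :=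
              Finset.sum_congr rfl (fun i _ => key2 i)
          _ = ∑ i, Real.negMulLog (s i) + (∑ i, s i) * Real.log (1-γ) := by
              rw [Finset.sum_add_distrib, Finset.sum_mul]
          _ = ∑ i, Real.negMulLog (s i) + (1-γ) * Real.log (1-γ) := by rw [hssum]
      have : ∑ i, ((1-γ) * Real.negMulLog (s i / (1-γ))) ≤ ∑ i, Real.negMulLog (q i) :=
        Finset.sum_le_sum (fun i _ => key i)
      rw [hsum] at this
      have : Real.negMulLog (1-γ) = -((1-γ) * Real.log (1-γ)) := by
        rw [Real.negMulLog]; ring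
      linarith
  -- combine
  have hnat : ∑ i, Real.negMulLog (p i) - ∑ i, Real.negMulLog (q i) ≤
      γ * Real.log m + Real.negMulLog γ + Real.negMulLog (1-γ) := by
    linarith
  have hlog2 : 0 < Real.log 2 := Real.log_pos (by norm_num)
  rw [ent_eq, ent_eq, hbin_eq, Real.logb, div_sub_div_same]
  calc (∑ a, Real.negMulLog (p a) - ∑ a, Real.negMulLog (q a)) / Real.log 2
      ≤ (γ * Real.log m + Real.negMulLog γ + Real.negMulLog (1-γ)) / Real.log 2 :=
        (div_le_div_iff_of_pos_right hlog2).mpr hnat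
    _ = γ * (Real.log m / Real.log 2)
        + (Real.negMulLog γ + Real.negMulLog (1-γ)) / Real.log 2 := by ring

lemma abs_eq_add_sub_two_min (a b : ℝ) : |a - b| = a + b - 2 * min a b := by
  rcases le_total a b with h | h
  · rw [abs_of_nonpos (by linarith), min_eq_left h]; ring
  · rw [abs_of_nonneg (by linarith), min_eq_right h]; ring

lemma entD {α : Type*} [Fintype α] (p q : α → ℝ) (hp : IsPMF p) (hq : IsPMF q)
    (γ : ℝ) (hγ0 : 0 ≤ γ) (hγ1 : γ < 1) (hTV : ∑ i, |p i - q i| ≤ 2 * γ)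
    (m : ℝ) (hm : (Fintype.card α : ℝ) ≤ m) :
    |ent p - ent q| ≤ γ * Real.logb 2 m + hbin γ := by
  set M := ∑ i, min (p i) (q i) with hMdef
  have habs : ∑ i, |p i - q i| = 2 - 2 * M := by
    rw [hMdef]
    have : ∀ i ∈ (univ : Finset α), |p i - q i| = p i + q i - 2 * min (p i) (q i) :=
      fun i _ => abs_eq_add_sub_two_min _ _
    rw [Finset.sum_congr rfl this, Finset.sum_sub_distrib, Finset.sum_add_distrib,
      hp.2, hq.2, ← Finset.mul_sum]
    ring
  have hM : 1 - γ ≤ M := by rw [habs] at hTV; linarith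
  have hMpos : 0 < M := lt_of_lt_of_le (by linarith) hM
  set c := (1 - γ) / M with hcdef
  have hc0 : 0 ≤ c := div_nonneg (by linarith) hMpos.le
  have hc1 : c ≤ 1 := by rw [hcdef, div_le_one hMpos]; exact hM
  set s := fun i => c * min (p i) (q i) with hsdef
  have hs0 : ∀ i, 0 ≤ s i := fun i => mul_nonneg hc0 (le_min (hp.1 i) (hq.1 i))
  have hsp : ∀ i, s i ≤ p i := fun i =>
    le_trans (mul_le_of_le_one_left (le_min (hp.1 i) (hq.1 i)) hc1) (min_le_left _ _)
  have hsq : ∀ i, s i ≤ q i := fun i =>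
    le_trans (mul_le_of_le_one_left (le_min (hp.1 i) (hq.1 i)) hc1) (min_le_right _ _)
  have hssum : ∑ i, s i = 1 - γ := by
    rw [hsdef]
    simp only [← Finset.mul_sum, ← hMdef, hcdef]
    field_simp
  have hcard : ∀ r : α → ℝ, ((univ.filter fun i => s i < r i).card : ℝ) ≤ m :=
    fun r => le_trans (by exact_mod_cast Finset.card_le_card (Finset.subset_univ _) :
      ((univ.filter fun i => s i < r i).card : ℝ) ≤ (Fintype.card α : ℝ)) hm
  rw [abs_sub_le_iff]
  constructor
  · exact entC p q s hp hq hs0 hsp hsq γ hγ0 hγ1 hssum m (hcard p)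
  · exact entC q p s hq hp hs0 hsq hsp γ hγ0 hγ1 hssum m (hcard q)

lemma entE {α : Type*} [Fintype α] (p q : α → ℝ) (hp : IsPMF p) (hq : IsPMF q)
    (γ : ℝ) (hγ : 2 * γ = ∑ i, |p i - q i|) (hγ1 : γ < 1) :
    |ent p - ent q| ≤ γ * Real.logb 2 ((Fintype.card α : ℝ) - 1) + hbin γ := by
  have hγ0 : 0 ≤ γ := by
    have : (0:ℝ) ≤ ∑ i, |p i - q i| := Finset.sum_nonneg (fun i _ => abs_nonneg _)
    linarith
  classical
  set s := fun i => min (p i) (q i) with hsdef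
  have hs0 : ∀ i, 0 ≤ s i := fun i => le_min (hp.1 i) (hq.1 i)
  have hsp : ∀ i, s i ≤ p i := fun i => min_le_left _ _
  have hsq : ∀ i, s i ≤ q i := fun i => min_le_right _ _
  have hssum : ∑ i, s i = 1 - γ := by
    have habs : ∑ i, |p i - q i| = 2 - 2 * ∑ i, s i := by
      have : ∀ i ∈ (univ : Finset α), |p i - q i| = p i + q i - 2 * s i :=
        fun i _ => abs_eq_add_sub_two_min _ _
      rw [Finset.sum_congr rfl this, Finset.sum_sub_distrib, Finset.sum_add_distrib,
        hp.2, hq.2, ← Finset.mul_sum]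
      ring
    rw [habs] at hγ
    linarith
  rcases eq_or_lt_of_le hγ0 with h0 | h0
  · have hpq : ∀ i ∈ (univ : Finset α), |p i - q i| = 0 := by
      rw [← Finset.sum_eq_zero_iff_of_nonneg (fun i _ => abs_nonneg _)]
      linarith
    have : p = q := by
      funext i
      have := hpq i (Finset.mem_univ i)
      have := abs_eq_zero.mp this
      linarith
    rw [this, ← h0]
    simp [hbin]
  · -- find witnesses
    have hex : ∀ r : α → ℝ, (∀ i, s i ≤ r i) → ∑ i, r i = 1 → ∃ j, s j < r j := by
      intro r hsr hr1
      by_contra h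
      push_neg at h
      have : ∀ i, r i = s i := fun i => le_antisymm (h i) (hsr i)
      have : ∑ i, r i = ∑ i, s i := Finset.sum_congr rfl (fun i _ => this i)
      rw [hr1, hssum] at this
      linarith
    obtain ⟨j, hj⟩ := hex q hsq hq.2
    obtain ⟨k, hk⟩ := hex p hsp hp.2
    have hcard1 : 1 ≤ Fintype.card α := Fintype.card_pos_iff.mpr ⟨j⟩
    have hdisj : ∀ i, ¬(s i < p i ∧ s i < q i) := by
      rintro i ⟨h1, h2⟩
      exact lt_irrefl (s i) (lt_min h1 h2)
    have hsub : ∀ (r w : α → ℝ) (j : α), s j < w j → (∀ i, ¬(s i < r i ∧ s i < w i)) →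
        ((univ.filter fun i => s i < r i).card : ℝ) ≤ (Fintype.card α : ℝ) - 1 := by
      intro r w j0 hj0 hd
      have hss : (univ.filter fun i => s i < r i) ⊆ univ.erase j0 := by
        intro i hi
        simp only [Finset.mem_filter, Finset.mem_univ, true_and] at hi
        apply Finset.mem_erase.mpr
        refine ⟨?_, Finset.mem_univ i⟩
        intro h
        subst h
        exact hd i ⟨hi, hj0⟩
      have := Finset.card_le_card hss
      rw [Finset.card_erase_of_mem (Finset.mem_univ j0), Finset.card_univ] at this
      have h2 : ((univ.filter fun i => s i < r i).card : ℝ) ≤ ((Fintype.card α - 1 : ℕ) : ℝ) := by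
        exact_mod_cast this
      rw [Nat.cast_sub hcard1] at h2
      simpa using h2
    rw [abs_sub_le_iff]
    constructor
    · exact entC p q s hp hq hs0 hsp hsq γ hγ0 hγ1 hssum _
        (hsub p q j hj (fun i h => hdisj i h))
    · exact entC q p s hq hp hs0 hsq hsp γ hγ0 hγ1 hssum _
        (hsub q p k hk (fun i ⟨h1, h2⟩ => hdisj i ⟨h2, h1⟩))

lemma mi_zero_right {α β : Type*} [Fintype α] [Fintype β] (p : α × β → ℝ)
    (hp : IsPMF p) (h : Fintype.card β = 1) : mi p = 0 := by
  obtain ⟨b0, hb0⟩ := Fintype.card_eq_one_iff.mp h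
  have huniv : (univ : Finset β) = {b0} := by
    ext b; simp [hb0 b]
  have hsum : ∀ f : α × β → ℝ, ∑ xy, f xy = ∑ a, f (a, b0) := by
    intro f
    rw [Fintype.sum_prod_type]
    apply Finset.sum_congr rfl
    intro a _
    rw [huniv, Finset.sum_singleton]
  have hX : ∀ a : α, ∑ b, p (a, b) = p (a, b0) := by
    intro a; rw [huniv, Finset.sum_singleton]
  have hY : ∀ b : β, ∑ a, p (a, b) = ∑ a, p (a, b0) := by
    intro b; rw [hb0 b]
  have hone : ∑ a, p (a, b0) = 1 := by rw [← hsum p]; exact hp.2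
  have e1 : ent (fun b => ∑ a, p (a, b)) = 0 := by
    rw [ent, huniv, Finset.sum_singleton, hone]
    simp
  have e2 : ent (fun a => ∑ b, p (a, b)) = ent p := by
    rw [ent, ent, hsum (fun xy => p xy * Real.logb 2 (p xy))]
    congr 1
    apply Finset.sum_congr rfl
    intro a _
    rw [hX a]
  rw [mi, e1, e2]
  ring

lemma mi_zero_left {α β : Type*} [Fintype α] [Fintype β] (p : α × β → ℝ)
    (hp : IsPMF p) (h : Fintype.card α = 1) : mi p = 0 := by
  obtain ⟨a0, ha0⟩ := Fintype.card_eq_one_iff.mp h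
  have huniv : (univ : Finset α) = {a0} := by
    ext a; simp [ha0 a]
  have hsum : ∀ f : α × β → ℝ, ∑ xy, f xy = ∑ b, f (a0, b) := by
    intro f
    rw [Fintype.sum_prod_type, huniv, Finset.sum_singleton]
  have hY : ∀ b : β, ∑ a, p (a, b) = p (a0, b) := by
    intro b; rw [huniv, Finset.sum_singleton]
  have hone : ∑ b, p (a0, b) = 1 := by rw [← hsum p]; exact hp.2
  have e1 : ent (fun a => ∑ b, p (a, b)) = 0 := by
    rw [ent, huniv, Finset.sum_singleton, hone]
    simp
  have e2 : ent (fun b => ∑ a, p (a, b)) = ent p := by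
    rw [ent, ent, hsum (fun xy => p xy * Real.logb 2 (p xy))]
    congr 1
    apply Finset.sum_congr rfl
    intro b _
    rw [hY b]
  rw [mi, e1, e2]
  ring

lemma hbin_nonneg {x : ℝ} (h0 : 0 ≤ x) (h1 : x ≤ 1) : 0 ≤ hbin x := by
  rw [hbin_eq]
  apply div_nonneg _ (Real.log_nonneg (by norm_num))
  have := Real.negMulLog_nonneg h0 h1
  have := Real.negMulLog_nonneg (by linarith : (0:ℝ) ≤ 1 - x) (by linarith)
  linarith

theorem mi_continuity {𝒳 𝒴 : Type*} [Fintype 𝒳] [Fintype 𝒴] [Nonempty 𝒳] [Nonempty 𝒴]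
    (p q : 𝒳 × 𝒴 → ℝ) (hp : IsPMF p) (hq : IsPMF q)
    (γ : ℝ) (hγ : γ = (1/2) * ∑ xy, |p xy - q xy|)
    (hbound : γ ≤ 1 - 1 / (Fintype.card (𝒳 × 𝒴) : ℝ)) :
    |mi p - mi q| ≤
      3 * γ * Real.logb 2 ((Fintype.card (𝒳 × 𝒴) : ℝ) - 1) + 3 * hbin γ := by
  classical
  have hγ0 : 0 ≤ γ := by
    rw [hγ]
    have : (0:ℝ) ≤ ∑ xy, |p xy - q xy| := Finset.sum_nonneg (fun i _ => abs_nonneg _)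
    linarith
  have hd1 : 1 ≤ Fintype.card (𝒳 × 𝒴) := Fintype.card_pos
  have hdprod : Fintype.card (𝒳 × 𝒴) = Fintype.card 𝒳 * Fintype.card 𝒴 := Fintype.card_prod _ _
  have hX1 : 1 ≤ Fintype.card 𝒳 := Fintype.card_pos
  have hY1 : 1 ≤ Fintype.card 𝒴 := Fintype.card_pos
  have hγle1 : γ ≤ 1 := by
    have : (0:ℝ) < (Fintype.card (𝒳 × 𝒴) : ℝ) := by exact_mod_cast hd1
    have : 0 < 1 / (Fintype.card (𝒳 × 𝒴) : ℝ) := by positivity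
    linarith
  -- degenerate cases
  by_cases hdeg : Fintype.card 𝒳 = 1 ∨ Fintype.card 𝒴 = 1
  · have hzero : mi p = 0 ∧ mi q = 0 := by
      rcases hdeg with h | h
      · exact ⟨mi_zero_left p hp h, mi_zero_left q hq h⟩
      · exact ⟨mi_zero_right p hp h, mi_zero_right q hq h⟩
    rw [hzero.1, hzero.2, sub_zero, abs_zero]
    by_cases hd : Fintype.card (𝒳 × 𝒴) = 1
    · have hγz : γ = 0 := by
        rw [hd] at hbound
        norm_num at hbound
        linarith
      rw [hγz, hd]
      norm_num [hbin]
    · have hd2 : 2 ≤ Fintype.card (𝒳 × 𝒴) := by omega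
      have hlog : 0 ≤ Real.logb 2 ((Fintype.card (𝒳 × 𝒴) : ℝ) - 1) := by
        apply Real.logb_nonneg (by norm_num)
        have : (2:ℝ) ≤ (Fintype.card (𝒳 × 𝒴) : ℝ) := by exact_mod_cast hd2
        linarith
      have := hbin_nonneg hγ0 hγle1
      positivity
  · push_neg at hdeg
    have hX2 : 2 ≤ Fintype.card 𝒳 := by omega
    have hY2 : 2 ≤ Fintype.card 𝒴 := by omega
    have hd4 : 4 ≤ Fintype.card (𝒳 × 𝒴) := by rw [hdprod]; nlinarith
    have hγ1 : γ < 1 := by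
      have h0 : (0:ℝ) < (Fintype.card (𝒳 × 𝒴) : ℝ) := by
        have : (1:ℝ) ≤ (Fintype.card (𝒳 × 𝒴) : ℝ) := by exact_mod_cast hd1
        linarith
      have : 0 < 1 / (Fintype.card (𝒳 × 𝒴) : ℝ) := by positivity
      linarith
    have hmdef : True := trivial
    have hmX : (Fintype.card 𝒳 : ℝ) ≤ (Fintype.card (𝒳 × 𝒴) : ℝ) - 1 := by
      have h1 : Fintype.card 𝒳 + 1 ≤ Fintype.card (𝒳 × 𝒴) := by rw [hdprod]; nlinarith
      have : ((Fintype.card 𝒳 + 1 : ℕ) : ℝ) ≤ (Fintype.card (𝒳 × 𝒴) : ℝ) := by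
        exact_mod_cast h1
      push_cast at this
      linarith
    have hmY : (Fintype.card 𝒴 : ℝ) ≤ (Fintype.card (𝒳 × 𝒴) : ℝ) - 1 := by
      have h1 : Fintype.card 𝒴 + 1 ≤ Fintype.card (𝒳 × 𝒴) := by rw [hdprod]; nlinarith
      have : ((Fintype.card 𝒴 + 1 : ℕ) : ℝ) ≤ (Fintype.card (𝒳 × 𝒴) : ℝ) := by
        exact_mod_cast h1
      push_cast at this
      linarith
    -- marginals
    have hpX : IsPMF (fun a => ∑ b, p (a, b)) :=
      ⟨fun a => Finset.sum_nonneg (fun b _ => hp.1 _), by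
        rw [← Fintype.sum_prod_type]; exact hp.2⟩
    have hqX : IsPMF (fun a => ∑ b, q (a, b)) :=
      ⟨fun a => Finset.sum_nonneg (fun b _ => hq.1 _), by
        rw [← Fintype.sum_prod_type]; exact hq.2⟩
    have hpY : IsPMF (fun b => ∑ a, p (a, b)) :=
      ⟨fun b => Finset.sum_nonneg (fun a _ => hp.1 _), by
        rw [Finset.sum_comm]
        rw [← Fintype.sum_prod_type]; exact hp.2⟩
    have hqY : IsPMF (fun b => ∑ a, q (a, b)) :=
      ⟨fun b => Finset.sum_nonneg (fun a _ => hq.1 _), by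
        rw [Finset.sum_comm]
        rw [← Fintype.sum_prod_type]; exact hq.2⟩
    have hTV : ∑ xy, |p xy - q xy| = 2 * γ := by rw [hγ]; ring
    have hTVX : ∑ a, |(fun a => ∑ b, p (a, b)) a - (fun a => ∑ b, q (a, b)) a| ≤ 2 * γ := by
      simp only
      calc ∑ a, |∑ b, p (a, b) - ∑ b, q (a, b)|
          = ∑ a, |∑ b, (p (a, b) - q (a, b))| := by
            apply Finset.sum_congr rfl
            intro a _
            rw [Finset.sum_sub_distrib]
        _ ≤ ∑ a, ∑ b, |p (a, b) - q (a, b)| :=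
            Finset.sum_le_sum (fun a _ => Finset.abs_sum_le_sum_abs _ _)
        _ = ∑ xy : 𝒳 × 𝒴, |p xy - q xy| := (Fintype.sum_prod_type (fun xy : 𝒳 × 𝒴 => |p xy - q xy|)).symm
        _ = 2 * γ := hTV
    have hTVY : ∑ b, |(fun b => ∑ a, p (a, b)) b - (fun b => ∑ a, q (a, b)) b| ≤ 2 * γ := by
      simp only
      calc ∑ b, |∑ a, p (a, b) - ∑ a, q (a, b)|
          = ∑ b, |∑ a, (p (a, b) - q (a, b))| := by
            apply Finset.sum_congr rfl
            intro b _
            rw [Finset.sum_sub_distrib]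
        _ ≤ ∑ b, ∑ a, |p (a, b) - q (a, b)| :=
            Finset.sum_le_sum (fun b _ => Finset.abs_sum_le_sum_abs _ _)
        _ = ∑ a, ∑ b, |p (a, b) - q (a, b)| := Finset.sum_comm
        _ = ∑ xy : 𝒳 × 𝒴, |p xy - q xy| := (Fintype.sum_prod_type (fun xy : 𝒳 × 𝒴 => |p xy - q xy|)).symm
        _ = 2 * γ := hTV
    have hJ : |ent p - ent q| ≤ γ * Real.logb 2 ((Fintype.card (𝒳 × 𝒴) : ℝ) - 1) + hbin γ := by
      exact entE p q hp hq γ (by rw [hγ]; ring) hγ1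
    have hMX : |ent (fun a => ∑ b, p (a, b)) - ent (fun a => ∑ b, q (a, b))| ≤
        γ * Real.logb 2 ((Fintype.card (𝒳 × 𝒴) : ℝ) - 1) + hbin γ :=
      entD _ _ hpX hqX γ hγ0 hγ1 hTVX _ hmX
    have hMY : |ent (fun b => ∑ a, p (a, b)) - ent (fun b => ∑ a, q (a, b))| ≤
        γ * Real.logb 2 ((Fintype.card (𝒳 × 𝒴) : ℝ) - 1) + hbin γ :=
      entD _ _ hpY hqY γ hγ0 hγ1 hTVY _ hmY
    have habs : |mi p - mi q| ≤
        |ent (fun a => ∑ b, p (a, b)) - ent (fun a => ∑ b, q (a, b))|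
        + |ent (fun b => ∑ a, p (a, b)) - ent (fun b => ∑ a, q (a, b))|
        + |ent p - ent q| := by
      rw [mi, mi]
      set A := ent (fun a => ∑ b, p (a, b)) - ent (fun a => ∑ b, q (a, b))
      set B := ent (fun b => ∑ a, p (a, b)) - ent (fun b => ∑ a, q (a, b))
      set C := ent p - ent q
      have : ent (fun a => ∑ b, p (a, b)) + ent (fun b => ∑ a, p (a, b)) - ent p
          - (ent (fun a => ∑ b, q (a, b)) + ent (fun b => ∑ a, q (a, b)) - ent q)
          = A + B - C := by ring
      rw [this]
      calc |A + B - C| ≤ |A + B| + |C| := abs_sub _ _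
        _ ≤ |A| + |B| + |C| := by
            have := abs_add_le A B
            linarith
    calc |mi p - mi q| ≤ _ := habs
      _ ≤ 3 * (γ * Real.logb 2 ((Fintype.card (𝒳 × 𝒴) : ℝ) - 1) + hbin γ) := by
          linarith
      _ = 3 * γ * Real.logb 2 ((Fintype.card (𝒳 × 𝒴) : ℝ) - 1) + 3 * hbin γ := by ring
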